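/- Let Γ(f), Γ(g) be Newton polyhedra in ℝ₊^n and (t₀,…,t₀) the diagonal intersection point with ∂Γ(fg). For every w ∈ ℝ₊^n with d(w,Γ(g)) − d(w,Γ(f)) > 0 (i.e. w ∈ T₊), one has σ(w)/(d(w,Γ(g)) − d(w,Γ(f))) ≥ σ(w)/(d(w,Γ(g)) + d(w,Γ(f))) ≥ 1/t₀. Consequently every candidate positive pole σ(w)/(d(w,Γ(g)) − d(w,Γ(f))) with w ∈ T₊ is at least 1/t₀. -/
import Mathlib


open Finset Pointwise

variable {n : ℕ}

/-- The pairing `⟨k,x⟩ = ∑ i, k i * x i`. -/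
noncomputable def dotp (k x : Fin n → ℝ) : ℝ := ∑ i, k i * x i

/-- Convex hull of the union of translated positive orthants `m + ℝ₊ⁿ`. -/
def orthHull (S : Set (Fin n → ℝ)) : Set (Fin n → ℝ) :=
  convexHull ℝ (⋃ m ∈ S, {x : Fin n → ℝ | ∀ i, m i ≤ x i})

/-- `Γ` is a Newton polyhedron: the convex hull of `⋃_{m ∈ supp} (m + ℝ₊ⁿ)`
for a nonempty finite set of lattice points (the support of a polynomial
vanishing at the origin). -/
def IsNewtonPolyhedron (Γ : Set (Fin n → ℝ)) : Prop :=
  ∃ S : Finset (Fin n → ℕ), S.Nonempty ∧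
    Γ = orthHull ((fun m : Fin n → ℕ => fun i => (m i : ℝ)) '' (S : Set (Fin n → ℕ)))

/-- `d(k,Γ) = min_{x ∈ Γ} ⟨k,x⟩`. -/
noncomputable def dval (k : Fin n → ℝ) (Γ : Set (Fin n → ℝ)) : ℝ :=
  sInf ((fun x => dotp k x) '' Γ)

/-- First meet locus `F(k,Γ) = {x ∈ Γ : ⟨k,x⟩ = d(k,Γ)}`. -/
def fmeet (k : Fin n → ℝ) (Γ : Set (Fin n → ℝ)) : Set (Fin n → ℝ) :=
  {x ∈ Γ | dotp k x = dval k Γ}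

/-- `σ(k) = ∑ i, k i`. -/
noncomputable def sigmaS (k : Fin n → ℝ) : ℝ := ∑ i, k i

/-- The smallest face of `Γ` containing a point `p`: the intersection of all
first meet loci (faces) containing `p`. -/
def minFace (Γ : Set (Fin n → ℝ)) (p : Fin n → ℝ) : Set (Fin n → ℝ) :=
  ⋂₀ {F | p ∈ F ∧ ∃ k : Fin n → ℝ, (∀ i, 0 ≤ k i) ∧ F = fmeet k Γ}

/-- Cast a lattice vector to `ℝⁿ`. -/
def natVec (w : Fin n → ℕ) : Fin n → ℝ := fun i => (w i : ℝ)

/-- `w` is the primitive normal vector of a facet (face of dimension `n-1`) of `Γ`. -/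
def IsPrimFacetNormal (Γ : Set (Fin n → ℝ)) (w : Fin n → ℕ) : Prop :=
  w ≠ 0 ∧ Finset.univ.gcd w = 1 ∧
    Module.finrank ℝ (affineSpan ℝ (fmeet (natVec w) Γ)).direction = n - 1

/-- `D(t₀)`: primitive normal vectors of the facets of `Γ` containing the
smallest face through the diagonal point `p = (t₀,…,t₀)`. -/
def Dset (Γ : Set (Fin n → ℝ)) (p : Fin n → ℝ) : Set (Fin n → ℕ) :=
  {w | IsPrimFacetNormal Γ w ∧ minFace Γ p ⊆ fmeet (natVec w) Γ}

lemma newton_nonneg {Γ : Set (Fin n → ℝ)} (hΓ : IsNewtonPolyhedron Γ) :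
    ∀ x ∈ Γ, ∀ i, 0 ≤ x i := by
  obtain ⟨S, hS, rfl⟩ := hΓ
  intro x hx
  have hconv : Convex ℝ {x : Fin n → ℝ | ∀ i, 0 ≤ x i} := by
    intro a ha b hb s t hs ht hst i
    exact add_nonneg (mul_nonneg hs (ha i)) (mul_nonneg ht (hb i))
  have := convexHull_min (by
    intro y hy
    simp only [Set.mem_iUnion] at hy
    obtain ⟨m, hm, hy⟩ := hy
    obtain ⟨m', hm', rfl⟩ := hm
    intro i
    exact le_trans (by positivity) (hy i)) hconv hx
  exact this

lemma newton_nonempty {Γ : Set (Fin n → ℝ)} (hΓ : IsNewtonPolyhedron Γ) :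
    Γ.Nonempty := by
  obtain ⟨S, ⟨m, hm⟩, rfl⟩ := hΓ
  refine ⟨fun i => (m i : ℝ), subset_convexHull ℝ _ ?_⟩
  simp only [Set.mem_iUnion]
  exact ⟨fun i => (m i : ℝ), ⟨m, hm, rfl⟩, fun i => le_refl _⟩

lemma dval_le {Γ : Set (Fin n → ℝ)} (hΓ : IsNewtonPolyhedron Γ)
    {w : Fin n → ℝ} (hw : ∀ i, 0 ≤ w i) {x : Fin n → ℝ} (hx : x ∈ Γ) :
    dval w Γ ≤ dotp w x := by
  refine csInf_le ⟨0, ?_⟩ ⟨x, hx, rfl⟩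
  rintro _ ⟨y, hy, rfl⟩
  exact Finset.sum_nonneg fun i _ => mul_nonneg (hw i) (newton_nonneg hΓ y hy i)

lemma dval_nonneg {Γ : Set (Fin n → ℝ)} (hΓ : IsNewtonPolyhedron Γ)
    {w : Fin n → ℝ} (hw : ∀ i, 0 ≤ w i) : 0 ≤ dval w Γ := by
  obtain ⟨x, hx⟩ := newton_nonempty hΓ
  refine le_csInf ⟨dotp w x, x, hx, rfl⟩ ?_
  rintro _ ⟨y, hy, rfl⟩
  exact Finset.sum_nonneg fun i _ => mul_nonneg (hw i) (newton_nonneg hΓ y hy i)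

/-- for every `w ∈ ℝ₊ⁿ` with `d(w,Γ(g)) − d(w,Γ(f)) > 0` (i.e. `w ∈ T₊`),
`σ(w)/(d(w,Γ(g)) − d(w,Γ(f))) ≥ σ(w)/(d(w,Γ(g)) + d(w,Γ(f))) ≥ 1/t₀`;
consequently every positive candidate pole is at least `1/t₀`. -/
theorem positive_candidate_poles_bounded_by_diagonal
    (hn : 2 ≤ n)
    (Γf Γg : Set (Fin n → ℝ))
    (hΓf : IsNewtonPolyhedron Γf) (hΓg : IsNewtonPolyhedron Γg)
    (t₀ : ℝ) (ht₀ : 0 < t₀)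
    (hdiag : (fun _ : Fin n => t₀) ∈ frontier (Γf + Γg)) :
    ∀ w : Fin n → ℝ, (∀ i, 0 ≤ w i) →
      0 < dval w Γg - dval w Γf →
      (sigmaS w / (dval w Γg - dval w Γf) ≥ sigmaS w / (dval w Γg + dval w Γf) ∧
       sigmaS w / (dval w Γg + dval w Γf) ≥ 1 / t₀ ∧
       1 / t₀ ≤ sigmaS w / (dval w Γg - dval w Γf)) := by
  intro w hw hpos
  have ha := dval_nonneg hΓf hw
  have hb := dval_nonneg hΓg hw
  set a := dval w Γf
  set b := dval w Γg
  -- key: sigmaS w * t₀ ≥ a + b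
  have hcont : Continuous (fun x : Fin n → ℝ => dotp w x) := by
    unfold dotp
    exact continuous_finset_sum _ fun i _ => continuous_const.mul (continuous_apply i)
  have hsub : Γf + Γg ⊆ {x | a + b ≤ dotp w x} := by
    rintro _ ⟨u, hu, v, hv, rfl⟩
    have h1 := dval_le hΓf hw hu
    have h2 := dval_le hΓg hw hv
    have : dotp w (u + v) = dotp w u + dotp w v := by
      unfold dotp
      rw [← Finset.sum_add_distrib]
      exact Finset.sum_congr rfl fun i _ => by simp [mul_add]
    simp only [Set.mem_setOf_eq, this]
    linarith
  have hclosed : IsClosed {x : Fin n → ℝ | a + b ≤ dotp w x} :=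
    isClosed_le continuous_const hcont
  have hp : (fun _ : Fin n => t₀) ∈ {x : Fin n → ℝ | a + b ≤ dotp w x} := by
    have : closure (Γf + Γg) ⊆ {x | a + b ≤ dotp w x} :=
      closure_minimal hsub hclosed
    exact this hdiag.1
  have hdot : dotp w (fun _ : Fin n => t₀) = sigmaS w * t₀ := by
    unfold dotp sigmaS
    rw [Finset.sum_mul]
  have hkey : a + b ≤ sigmaS w * t₀ := by rw [← hdot]; exact hp
  have hσ : 0 ≤ sigmaS w := Finset.sum_nonneg fun i _ => hw i
  have hab : 0 < b + a := by linarith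
  have h2 : 1 / t₀ ≤ sigmaS w / (b + a) := by
    rw [div_le_div_iff₀ ht₀ hab]
    linarith
  have h1 : sigmaS w / (b + a) ≤ sigmaS w / (b - a) := by
    gcongr
    linarith
  exact ⟨h1, h2, le_trans h2 h1⟩
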